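/- Let 1 ≤ λ₁ ≤ λ₂, a ∈ ℝ, b ≥ 0, θ ∈ (0,∞), and let M₂⁻ = {(n,m₁,m₂) ∈ ℤ³ : n < 0, 2^{nλ₁}|m₁| ≤ 2^{nλ₂}|m₂|, 2^{nλ₂}|m₂| ≤ 2^n}. Then ∑_{(n,m₁,m₂)∈M₂⁻} (2^{na}·2^{-bn})^θ < ∞ if and only if θ(a - b) + 2 - λ₁ - λ₂ > 0. -/

import Mathlib

def M2minus (l1 l2 : ℝ) : Set (ℤ × ℤ × ℤ) :=
  {p | p.1 < 0 ∧
    (2 : ℝ) ^ ((p.1 : ℝ) * l1) * |(p.2.1 : ℝ)| ≤ (2 : ℝ) ^ ((p.1 : ℝ) * l2) * |(p.2.2 : ℝ)| ∧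
    (2 : ℝ) ^ ((p.1 : ℝ) * l2) * |(p.2.2 : ℝ)| ≤ (2 : ℝ) ^ ((p.1 : ℝ))}

set_option maxHeartbeats 1000000

open Real

private lemma one_le_two_rpow {x : ℝ} (hx : 0 ≤ x) : (1:ℝ) ≤ (2:ℝ) ^ x := by
  calc (1:ℝ) = (2:ℝ) ^ (0:ℝ) := by simp
  _ ≤ (2:ℝ) ^ x := (Real.rpow_le_rpow_left_iff one_lt_two).mpr hx

private lemma half_le_floor {x : ℝ} (hx : 1 ≤ x) : x / 2 ≤ (⌊x⌋ : ℝ) := by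
  have h1 : (1:ℝ) ≤ (⌊x⌋ : ℝ) := by exact_mod_cast Int.le_floor.mpr (by exact_mod_cast hx)
  rcases le_or_gt 2 x with h | h
  · have := Int.sub_one_lt_floor x; linarith
  · linarith

private lemma quarter_le_floor_sub {x : ℝ} (hx : 1 ≤ x) :
    x / 4 ≤ (⌊x⌋ : ℝ) - (⌊x/2⌋ : ℝ) := by
  rcases le_or_gt 2 x with h | h
  · have h2 : (1:ℝ) ≤ x / 2 := by linarith
    have hf : (x/2)/2 ≤ (⌊x/2⌋ : ℝ) := half_le_floor h2
    have hd : ((2 * ⌊x/2⌋ : ℤ) : ℝ) ≤ (⌊x⌋ : ℝ) := by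
      exact_mod_cast Int.le_floor.mpr (by push_cast; linarith [Int.floor_le (x/2)])
    push_cast at hd
    linarith
  · have h0 : ⌊x/2⌋ = 0 := Int.floor_eq_zero_iff.mpr ⟨by linarith, by linarith⟩
    have h1 : (1:ℝ) ≤ (⌊x⌋ : ℝ) := by exact_mod_cast Int.le_floor.mpr (by exact_mod_cast hx)
    rw [h0]; push_cast; linarith

private lemma term_eq (a b θ x : ℝ) :
    ((2:ℝ) ^ (x * a) * (2:ℝ) ^ (-(b * x))) ^ θ = (2:ℝ) ^ (x * (θ * (a - b))) := by
  rw [← Real.rpow_add two_pos, ← Real.rpow_mul (by norm_num)]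
  congr 1
  ring

noncomputable def auxk (δ : ℝ) : ℤ → ℝ := fun m => (max 1 |(m:ℝ)|) ^ (-(1+δ))

noncomputable def auxh (s : ℝ) : ℤ → ℝ := fun n => ((2:ℝ) ^ (-s)) ^ n.natAbs

private lemma auxk_nonneg (δ : ℝ) (m : ℤ) : 0 ≤ auxk δ m :=
  Real.rpow_nonneg (by positivity) _

private lemma auxh_nonneg (s : ℝ) (n : ℤ) : 0 ≤ auxh s n :=
  pow_nonneg (Real.rpow_nonneg (by norm_num) _) _

private lemma auxh_eq {s : ℝ} {n : ℤ} (hn : n < 0) : auxh s n = (2:ℝ) ^ ((n:ℝ) * s) := by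
  unfold auxh
  rw [← Real.rpow_natCast ((2:ℝ)^(-s)) n.natAbs, ← Real.rpow_mul (by norm_num)]
  congr 1
  have h : ((n.natAbs : ℕ) : ℝ) = -(n:ℝ) := by
    have h2 : ((n.natAbs : ℕ) : ℤ) = -n := by omega
    calc ((n.natAbs : ℕ) : ℝ) = (((n.natAbs : ℕ) : ℤ) : ℝ) := (Int.cast_natCast _).symm
      _ = ((-n : ℤ) : ℝ) := by rw [h2]
      _ = -(n:ℝ) := by push_cast; ring
  rw [h]; ring

private lemma summable_auxh {s : ℝ} (hs : 0 < s) : Summable (auxh s) := by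
  have hr0 : (0:ℝ) ≤ (2:ℝ) ^ (-s) := Real.rpow_nonneg (by norm_num) _
  have hr1 : (2:ℝ) ^ (-s) < 1 :=
    Real.rpow_lt_one_of_one_lt_of_neg one_lt_two (by linarith)
  have hgeo := summable_geometric_of_lt_one hr0 hr1
  rw [summable_int_iff_summable_nat_and_neg]
  exact ⟨hgeo.congr fun n => by simp [auxh],
    hgeo.congr fun n => by simp [auxh]⟩

private lemma summable_auxk {δ : ℝ} (hδ : 0 < δ) : Summable (auxk δ) := by
  have base : Summable (fun n : ℕ => ((n:ℝ)) ^ (-(1+δ))) :=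
    Real.summable_nat_rpow.mpr (by linarith)
  have knat : Summable (fun n : ℕ => auxk δ (n:ℤ)) := by
    apply (summable_nat_add_iff (f := fun n : ℕ => auxk δ (n:ℤ)) 1).mp
    refine ((summable_nat_add_iff 1).mpr base).congr fun n => ?_
    show (((n+1:ℕ)):ℝ) ^ (-(1+δ)) = auxk δ ((n+1:ℕ):ℤ)
    unfold auxk
    congr 1
    have h1 : (|(((n+1:ℕ):ℤ):ℝ)|) = ((n+1:ℕ):ℝ) := by
      push_cast; rw [abs_of_nonneg (by positivity)]
    rw [h1, max_eq_right (by exact_mod_cast Nat.succ_le_succ (Nat.zero_le n))]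
  rw [summable_int_iff_summable_nat_and_neg]
  refine ⟨knat, knat.congr fun n => ?_⟩
  unfold auxk
  simp

private lemma summable_of_pos (l1 l2 a b θ : ℝ) (h1 : 1 ≤ l1) (h12 : l1 ≤ l2) (hθ : 0 < θ)
    (hε : 0 < θ * (a - b) + 2 - l1 - l2) :
    Summable (fun p : M2minus l1 l2 =>
        ((2 : ℝ) ^ (((p : ℤ × ℤ × ℤ).1 : ℝ) * a) *
         (2 : ℝ) ^ (-(b * ((p : ℤ × ℤ × ℤ).1 : ℝ)))) ^ θ) := by
  have hl2 : (1:ℝ) ≤ l2 := le_trans h1 h12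
  have hl2p : (0:ℝ) < l2 := by linarith
  set s : ℝ := (θ * (a - b) + 2 - l1 - l2) / 3 with hs_def
  have hs : 0 < s := by rw [hs_def]; linarith
  set δ : ℝ := s / l2 with hδ_def
  have hδ : 0 < δ := div_pos hs hl2p
  have hc3 : θ * (a - b) = 3 * s + l1 + l2 - 2 := by rw [hs_def]; ring
  have hkey : (l1 + l2 - 2) * δ ≤ 2 * s := by
    rw [hδ_def, mul_div_assoc', div_le_iff₀ hl2p]
    nlinarith [mul_nonneg (show (0:ℝ) ≤ l2 - l1 + 2 by linarith) hs.le]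
  have hG : Summable (fun p : ℤ × ℤ × ℤ => auxh s p.1 * (auxk δ p.2.1 * auxk δ p.2.2)) :=
    (summable_auxh hs).mul_of_nonneg
      ((summable_auxk hδ).mul_of_nonneg (summable_auxk hδ) (auxk_nonneg δ) (auxk_nonneg δ))
      (auxh_nonneg s) (fun q => mul_nonneg (auxk_nonneg δ _) (auxk_nonneg δ _))
  refine Summable.of_nonneg_of_le (fun p => Real.rpow_nonneg (by positivity) θ)
    ?_ (hG.subtype (M2minus l1 l2))
  rintro ⟨⟨n, m1, m2⟩, hn, hc1, hc2⟩
  show ((2:ℝ) ^ ((n:ℝ) * a) * (2:ℝ) ^ (-(b * (n:ℝ)))) ^ θ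
      ≤ auxh s n * (auxk δ m1 * auxk δ m2)
  set t : ℝ := (n:ℝ) with ht_def
  have htneg : t < 0 := by rw [ht_def]; exact_mod_cast hn
  have hP1 : (0:ℝ) < 2 ^ (t * l1) := Real.rpow_pos_of_pos two_pos _
  have hP2 : (0:ℝ) < 2 ^ (t * l2) := Real.rpow_pos_of_pos two_pos _
  have hm2 : |(m2:ℝ)| ≤ 2 ^ (t * (1 - l2)) := by
    have key : (2:ℝ) ^ (t * l2) * |(m2:ℝ)| ≤ 2 ^ (t * l2) * 2 ^ (t * (1 - l2)) := by
      rw [← Real.rpow_add two_pos]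
      calc (2:ℝ) ^ (t*l2) * |(m2:ℝ)| ≤ 2 ^ t := hc2
      _ = 2 ^ (t*l2 + t*(1-l2)) := by congr 1; ring
    exact le_of_mul_le_mul_left key hP2
  have hm1 : |(m1:ℝ)| ≤ 2 ^ (t * (1 - l1)) := by
    have key : (2:ℝ) ^ (t * l1) * |(m1:ℝ)| ≤ 2 ^ (t * l1) * 2 ^ (t * (1 - l1)) := by
      rw [← Real.rpow_add two_pos]
      calc (2:ℝ) ^ (t*l1) * |(m1:ℝ)| ≤ 2 ^ (t*l2) * |(m2:ℝ)| := hc1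
      _ ≤ 2 ^ t := hc2
      _ = 2 ^ (t*l1 + t*(1-l1)) := by congr 1; ring
    exact le_of_mul_le_mul_left key hP1
  have hM1 : max 1 |(m1:ℝ)| ≤ 2 ^ (t * (1 - l1)) :=
    max_le (one_le_two_rpow (by nlinarith)) hm1
  have hM2 : max 1 |(m2:ℝ)| ≤ 2 ^ (t * (1 - l2)) :=
    max_le (one_le_two_rpow (by nlinarith)) hm2
  have hk1 : ((2:ℝ) ^ (t*(1-l1))) ^ (-(1+δ)) ≤ auxk δ m1 :=
    Real.rpow_le_rpow_of_nonpos (lt_of_lt_of_le one_pos (le_max_left _ _)) hM1 (by linarith)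
  have hk2 : ((2:ℝ) ^ (t*(1-l2))) ^ (-(1+δ)) ≤ auxk δ m2 :=
    Real.rpow_le_rpow_of_nonpos (lt_of_lt_of_le one_pos (le_max_left _ _)) hM2 (by linarith)
  calc ((2:ℝ) ^ (t * a) * 2 ^ (-(b * t))) ^ θ = 2 ^ (t * (θ * (a-b))) := term_eq a b θ t
    _ ≤ 2 ^ (t*s) * (((2:ℝ) ^ (t*(1-l1))) ^ (-(1+δ)) * ((2:ℝ) ^ (t*(1-l2))) ^ (-(1+δ))) := by
        rw [← Real.rpow_mul (by norm_num : (0:ℝ) ≤ 2) (t*(1-l1)),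
            ← Real.rpow_mul (by norm_num : (0:ℝ) ≤ 2) (t*(1-l2)),
            ← Real.rpow_add two_pos, ← Real.rpow_add two_pos]
        apply (Real.rpow_le_rpow_left_iff one_lt_two).mpr
        have hprod : t * (2 * s - (l1 + l2 - 2) * δ) ≤ 0 :=
          mul_nonpos_of_nonpos_of_nonneg htneg.le (by linarith)
        nlinarith [hprod, hc3]
    _ ≤ auxh s n * (auxk δ m1 * auxk δ m2) := by
        rw [auxh_eq hn, ← ht_def]
        apply mul_le_mul_of_nonneg_left _ (Real.rpow_nonneg (by norm_num) _)
        exact mul_le_mul hk1 hk2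
          (Real.rpow_nonneg (Real.rpow_nonneg (by norm_num) _) _) (auxk_nonneg δ m1)

theorem sum_M2minus_iff (l1 l2 a b θ : ℝ) (h1 : 1 ≤ l1) (h12 : l1 ≤ l2)
    (hb : 0 ≤ b) (hθ : 0 < θ) :
    Summable (fun p : M2minus l1 l2 =>
        ((2 : ℝ) ^ (((p : ℤ × ℤ × ℤ).1 : ℝ) * a) *
         (2 : ℝ) ^ (-(b * ((p : ℤ × ℤ × ℤ).1 : ℝ)))) ^ θ) ↔
      0 < θ * (a - b) + 2 - l1 - l2 := by
  constructor
  · intro hsum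
    by_contra hcond
    push_neg at hcond
    have hl2 : (1:ℝ) ≤ l2 := le_trans h1 h12
    have hFsum : Summable ((M2minus l1 l2).indicator
        (fun p : ℤ × ℤ × ℤ => ((2:ℝ) ^ ((p.1:ℝ) * a) * (2:ℝ) ^ (-(b * (p.1:ℝ)))) ^ θ)) :=
      summable_subtype_iff_indicator.mp hsum
    set F : ℤ × ℤ × ℤ → ℝ := (M2minus l1 l2).indicator
        (fun p : ℤ × ℤ × ℤ => ((2:ℝ) ^ ((p.1:ℝ) * a) * (2:ℝ) ^ (-(b * (p.1:ℝ)))) ^ θ)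
      with hF_def
    have hF0 : ∀ p, 0 ≤ F p := by
      rw [hF_def]
      exact Set.indicator_nonneg (fun p _ => Real.rpow_nonneg (by positivity) θ)
    set S : ℤ → Finset (ℤ × ℤ × ℤ) := fun N =>
      ({-N} : Finset ℤ) ×ˢ
        ((Finset.Icc 0 ⌊(2:ℝ) ^ ((N:ℝ)*(l1-1)) / 2⌋) ×ˢ
         (Finset.Ioc ⌊(2:ℝ) ^ ((N:ℝ)*(l2-1)) / 2⌋ ⌊(2:ℝ) ^ ((N:ℝ)*(l2-1))⌋)) with hS_def
    have key : ∀ N : ℤ, 1 ≤ N → (1:ℝ)/8 ≤ ∑ p ∈ S N, F p := by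
      intro N hN
      have hu1 : (1:ℝ) ≤ (N:ℝ) := by exact_mod_cast hN
      set u : ℝ := (N:ℝ) with hu_def
      set A : ℝ := (2:ℝ) ^ (u*(l2-1)) with hA_def
      set B : ℝ := (2:ℝ) ^ (u*(l1-1)) with hB_def
      have hA1 : (1:ℝ) ≤ A := one_le_two_rpow (by nlinarith)
      have hB1 : (1:ℝ) ≤ B := one_le_two_rpow (by nlinarith)
      have hEA : (2:ℝ) ^ (-u*l2) * A = 2 ^ (-u) := by
        rw [hA_def, ← Real.rpow_add two_pos]; congr 1; ring
      have hEB : (2:ℝ) ^ (-u*l1) * B = 2 ^ (-u) := by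
        rw [hB_def, ← Real.rpow_add two_pos]; congr 1; ring
      have hSN : S N = ({-N} : Finset ℤ) ×ˢ
          ((Finset.Icc 0 ⌊B / 2⌋) ×ˢ (Finset.Ioc ⌊A / 2⌋ ⌊A⌋)) := by
        rw [hS_def]
      have hmem : ∀ p ∈ S N, p ∈ M2minus l1 l2 := by
        rintro ⟨n, m1, m2⟩ hp
        rw [hSN] at hp
        simp only [Finset.mem_product, Finset.mem_singleton, Finset.mem_Icc,
          Finset.mem_Ioc] at hp
        obtain ⟨hp1, ⟨hm10, hm1B⟩, hm2lo, hm2hi⟩ := hp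
        have hnr : ((n:ℤ):ℝ) = -u := by rw [hp1, hu_def]; push_cast; ring
        have hm1r : (m1:ℝ) ≤ B/2 :=
          le_trans (by exact_mod_cast hm1B) (Int.floor_le _)
        have hm2r : (m2:ℝ) ≤ A := le_trans (by exact_mod_cast hm2hi) (Int.floor_le _)
        have hm2lo' : A/2 < (m2:ℝ) := by
          have h2 : ((⌊A/2⌋ : ℤ) : ℝ) + 1 ≤ (m2:ℝ) := by exact_mod_cast hm2lo
          linarith [Int.lt_floor_add_one (A/2)]
        have hm2pos : (0:ℝ) < (m2:ℝ) := by linarith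
        have habs1 : |((m1:ℤ):ℝ)| = (m1:ℝ) := abs_of_nonneg (by exact_mod_cast hm10)
        have habs2 : |((m2:ℤ):ℝ)| = (m2:ℝ) := abs_of_nonneg hm2pos.le
        refine ⟨by omega, ?_, ?_⟩
        · show (2:ℝ) ^ (((n:ℤ):ℝ) * l1) * |((m1:ℤ):ℝ)| ≤
            (2:ℝ) ^ (((n:ℤ):ℝ) * l2) * |((m2:ℤ):ℝ)|
          rw [hnr, habs1, habs2]
          calc (2:ℝ) ^ (-u*l1) * (m1:ℝ) ≤ 2 ^ (-u*l1) * (B/2) :=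
                mul_le_mul_of_nonneg_left hm1r (Real.rpow_nonneg (by norm_num) _)
            _ = 2 ^ (-u) / 2 := by rw [← mul_div_assoc, hEB]
            _ = 2 ^ (-u*l2) * (A/2) := by rw [← mul_div_assoc, hEA]
            _ ≤ 2 ^ (-u*l2) * (m2:ℝ) :=
                mul_le_mul_of_nonneg_left hm2lo'.le (Real.rpow_nonneg (by norm_num) _)
        · show (2:ℝ) ^ (((n:ℤ):ℝ) * l2) * |((m2:ℤ):ℝ)| ≤ (2:ℝ) ^ ((n:ℤ):ℝ)
          rw [hnr, habs2]
          calc (2:ℝ) ^ (-u*l2) * (m2:ℝ) ≤ 2 ^ (-u*l2) * A :=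
                mul_le_mul_of_nonneg_left hm2r (Real.rpow_nonneg (by norm_num) _)
            _ = 2 ^ (-u) := hEA
      have hBnn : (0:ℤ) ≤ ⌊B/2⌋ + 1 := by
        have : (0:ℤ) ≤ ⌊B/2⌋ := Int.floor_nonneg.mpr (by linarith)
        omega
      have hAnn : (0:ℤ) ≤ ⌊A⌋ - ⌊A/2⌋ := by
        have := Int.floor_mono (show A/2 ≤ A by linarith)
        omega
      have hcard : A*B/8 ≤ ((S N).card : ℝ) := by
        rw [hSN, Finset.card_product, Finset.card_product, Finset.card_singleton,
          Int.card_Icc, Int.card_Ioc, sub_zero]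
        obtain ⟨x, hx⟩ : ∃ x : ℕ, (⌊B/2⌋ + 1 : ℤ) = (x:ℤ) :=
          ⟨_, (Int.toNat_of_nonneg hBnn).symm⟩
        obtain ⟨y, hy⟩ : ∃ y : ℕ, (⌊A⌋ - ⌊A/2⌋ : ℤ) = (y:ℤ) :=
          ⟨_, (Int.toNat_of_nonneg hAnn).symm⟩
        rw [hx, hy, Int.toNat_natCast, Int.toNat_natCast]
        have hxR : B/2 ≤ (x:ℝ) := by
          have hc : ((⌊B/2⌋:ℤ):ℝ) + 1 = (x:ℝ) := by exact_mod_cast hx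
          linarith [Int.lt_floor_add_one (B/2)]
        have hyR : A/4 ≤ (y:ℝ) := by
          have hc : ((⌊A⌋:ℤ):ℝ) - ((⌊A/2⌋:ℤ):ℝ) = (y:ℝ) := by exact_mod_cast hy
          linarith [quarter_le_floor_sub hA1]
        push_cast
        nlinarith [mul_le_mul hxR hyR (by linarith) (by positivity), hA1, hB1]
      have hsum_eq : ∑ p ∈ S N, F p = ((S N).card : ℝ) * (2:ℝ) ^ (-u * (θ*(a-b))) := by
        rw [Finset.sum_congr rfl (g := fun _ => (2:ℝ) ^ (-u*(θ*(a-b))))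
          (fun p hp => ?_), Finset.sum_const, nsmul_eq_mul]
        have hpm := hmem p hp
        have hp1 : p.1 = -N := by
          rw [hSN] at hp
          simp only [Finset.mem_product, Finset.mem_singleton] at hp
          exact hp.1
        have hnr : ((p.1:ℤ):ℝ) = -u := by rw [hp1, hu_def]; push_cast; ring
        rw [hF_def, Set.indicator_of_mem hpm, term_eq a b θ, hnr]
      have hABε : A * B * (2:ℝ) ^ (-u*(θ*(a-b))) =
          (2:ℝ) ^ (-u * (θ*(a-b)+2-l1-l2)) := by
        rw [hA_def, hB_def, ← Real.rpow_add two_pos, ← Real.rpow_add two_pos]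
        congr 1; ring
      have h2ε : (1:ℝ) ≤ (2:ℝ) ^ (-u * (θ*(a-b)+2-l1-l2)) :=
        one_le_two_rpow (by nlinarith [hu1, hcond])
      calc (1:ℝ)/8 ≤ (2:ℝ) ^ (-u*(θ*(a-b)+2-l1-l2)) / 8 := by linarith
        _ = (A*B/8) * 2 ^ (-u*(θ*(a-b))) := by rw [← hABε]; ring
        _ ≤ ((S N).card : ℝ) * 2 ^ (-u*(θ*(a-b))) :=
            mul_le_mul_of_nonneg_right hcard (Real.rpow_nonneg (by norm_num) _)
        _ = ∑ p ∈ S N, F p := hsum_eq.symm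
    have hbound : ∀ K : ℕ, (K:ℝ)/8 ≤ ∑' p, F p := by
      intro K
      have hdisj : (↑(Finset.Icc (1:ℤ) (K:ℤ)) : Set ℤ).PairwiseDisjoint S := by
        intro i _ j _ hij
        simp only [Function.onFun]
        apply Finset.disjoint_left.mpr
        intro p hpi hpj
        rw [hS_def] at hpi hpj
        simp only [Finset.mem_product, Finset.mem_singleton] at hpi hpj
        exact hij (by omega)
      have hKcard : ((Finset.Icc (1:ℤ) (K:ℤ)).card : ℝ) = K := by
        rw [Int.card_Icc]
        have : ((K:ℤ) + 1 - 1).toNat = K := by omega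
        rw [this]
      calc (K:ℝ)/8 = ((Finset.Icc (1:ℤ) (K:ℤ)).card : ℝ) * (1/8) := by
            rw [hKcard]; ring
        _ ≤ ∑ N ∈ Finset.Icc (1:ℤ) (K:ℤ), ∑ p ∈ S N, F p := by
            have h := Finset.sum_le_sum (s := Finset.Icc (1:ℤ) (K:ℤ))
              (f := fun _ : ℤ => (1:ℝ)/8) (g := fun N => ∑ p ∈ S N, F p)
              (fun N hN => key N (Finset.mem_Icc.mp hN).1)
            rwa [Finset.sum_const, nsmul_eq_mul] at h
        _ = ∑ p ∈ (Finset.Icc (1:ℤ) (K:ℤ)).biUnion S, F p := (Finset.sum_biUnion hdisj).symm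
        _ ≤ ∑' p, F p := Summable.sum_le_tsum _ (fun p _ => hF0 p) hFsum
    obtain ⟨K, hK⟩ := exists_nat_gt (8 * ∑' p, F p)
    have := hbound K
    linarith
  · intro hε
    exact summable_of_pos l1 l2 a b θ h1 h12 hθ hε
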